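/- Let p₁ ≥ 0 and m ≥ 0 be integers, set p₂ = p₁ + m, and let H be a real symmetric positive definite p₂×p₂ matrix partitioned as H = [[H_θθ, H_θζ],[H_ζθ, H_ζζ]] with H_θθ of size p₁×p₁. Form the (p₁+p₂)×(p₁+p₂) block matrix B = [[−J₁₁H_θθ⁻¹, J₁₂H⁻¹],[−J₂₁H_θθ⁻¹, J₂₂H⁻¹]], where J₁₁ = H_θθ, J₁₂ = [H_θθ, H_θζ] (the first p₁ rows of H), J₂₁ = J₁₂ᵀ, and J₂₂ = H. Then the characteristic polynomial of B equals X^{2p₁}(X−1)^m; that is, B has eigenvalue 0 with algebraic multiplicity 2p₁ and eigenvalue 1 with algebraic multiplicity m. (This is the full-likelihood case, where the matrix J coincides with the Hessian matrix H, so all m nonzero eigenvalues λᵢ of B equal 1.) -/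

import Mathlib

open Matrix Polynomial

/-- The top-left block of a positive definite block matrix is positive definite. -/
lemma posDef_toBlocks₁₁ {p m : ℕ} {A : Matrix (Fin p) (Fin p) ℝ}
    {B : Matrix (Fin p) (Fin m) ℝ} {C : Matrix (Fin m) (Fin p) ℝ}
    {D : Matrix (Fin m) (Fin m) ℝ}
    (h : (Matrix.fromBlocks A B C D).PosDef) : A.PosDef := by
  refine Matrix.PosDef.of_dotProduct_mulVec_pos ?_ ?_
  · have h1 := h.1
    ext i j
    have := congrFun (congrFun h1 (Sum.inl i)) (Sum.inl j)
    simpa [Matrix.conjTranspose_apply, Matrix.fromBlocks] using this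
  · intro x hx
    have hne : (Sum.elim x 0 : Fin p ⊕ Fin m → ℝ) ≠ 0 := by
      intro hc
      apply hx
      ext i
      exact congrFun hc (Sum.inl i)
    have := h.dotProduct_mulVec_pos hne
    simpa [Matrix.fromBlocks_mulVec, sumElim_dotProduct_sumElim] using this

theorem charpoly_fullLikelihood_B (p₁ m : ℕ)
    (Htt : Matrix (Fin p₁) (Fin p₁) ℝ) (Htz : Matrix (Fin p₁) (Fin m) ℝ)
    (Hzt : Matrix (Fin m) (Fin p₁) ℝ) (Hzz : Matrix (Fin m) (Fin m) ℝ)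
    (hH : (Matrix.fromBlocks Htt Htz Hzt Hzz).PosDef) :
    (Matrix.fromBlocks
        (-(Htt * Htt⁻¹))
        ((Matrix.fromCols Htt Htz) * (Matrix.fromBlocks Htt Htz Hzt Hzz)⁻¹)
        (-((Matrix.fromCols Htt Htz)ᵀ * Htt⁻¹))
        ((Matrix.fromBlocks Htt Htz Hzt Hzz) *
          (Matrix.fromBlocks Htt Htz Hzt Hzz)⁻¹)).charpoly =
      X ^ (2 * p₁) * (X - 1) ^ m := by
  have hHtt : Htt.PosDef := posDef_toBlocks₁₁ hH
  have h1 : Htt * Htt⁻¹ = 1 := Matrix.mul_nonsing_inv _ hHtt.det_pos.ne'.isUnit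
  have h2 : (Matrix.fromBlocks Htt Htz Hzt Hzz) * (Matrix.fromBlocks Htt Htz Hzt Hzz)⁻¹ = 1 :=
    Matrix.mul_nonsing_inv _ hH.det_pos.ne'.isUnit
  -- symmetry facts
  have hzt : Htzᵀ = Hzt := by
    ext i j
    have := congrFun (congrFun hH.1 (Sum.inl j)) (Sum.inr i)
    simpa [Matrix.conjTranspose_apply, Matrix.fromBlocks] using this.symm
  have htt : Httᵀ = Htt := hHtt.1
  -- simplify the blocks of B
  have hb12 : (Matrix.fromCols Htt Htz) * (Matrix.fromBlocks Htt Htz Hzt Hzz)⁻¹ =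
      Matrix.fromCols 1 0 := by
    have : Matrix.fromCols Htt Htz =
        Matrix.fromCols (1 : Matrix (Fin p₁) (Fin p₁) ℝ) (0 : Matrix (Fin p₁) (Fin m) ℝ) *
          Matrix.fromBlocks Htt Htz Hzt Hzz := by
      rw [Matrix.fromCols_mul_fromBlocks]
      simp
    rw [this, Matrix.mul_assoc, h2, Matrix.mul_one]
  have hb21 : (Matrix.fromCols Htt Htz)ᵀ * Htt⁻¹ =
      Matrix.fromRows 1 (Hzt * Htt⁻¹) := by
    rw [Matrix.transpose_fromCols, htt, hzt, Matrix.fromRows_mul, h1]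
  rw [h1, h2, hb12, hb21]
  set K : Matrix (Fin m) (Fin p₁) ℝ := Hzt * Htt⁻¹ with hK
  -- Now compute the characteristic polynomial of the explicit matrix
  rw [Matrix.charpoly]
  rw [← Matrix.det_submatrix_equiv_self (Equiv.sumAssoc (Fin p₁) (Fin p₁) (Fin m)) _]
  have key : (Matrix.charmatrix (Matrix.fromBlocks (-1) (Matrix.fromCols 1 0)
        (-(Matrix.fromRows 1 K)) 1)).submatrix
        (Equiv.sumAssoc (Fin p₁) (Fin p₁) (Fin m))
        (Equiv.sumAssoc (Fin p₁) (Fin p₁) (Fin m)) =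
      Matrix.fromBlocks
        (Matrix.fromBlocks (((X : ℝ[X]) + 1) • 1) (-1) 1 (((X : ℝ[X]) - 1) • 1))
        0
        (Matrix.fromCols (K.map Polynomial.C) 0)
        (((X : ℝ[X]) - 1) • (1 : Matrix (Fin m) (Fin m) ℝ[X])) := by
    ext i j
    rcases i with (i | i) | i <;> rcases j with (j | j) | j <;>
      simp [Matrix.charmatrix, Matrix.fromBlocks, Matrix.one_apply, Matrix.fromCols,
        Matrix.fromRows_apply_inl, Matrix.fromRows_apply_inr, Matrix.diagonal, mul_comm, sub_eq_add_neg] <;>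
      split <;> simp_all <;> ring
  rw [key, Matrix.det_fromBlocks_zero₁₂]
  -- determinant of the (X-1) block
  have hdm : (((X : ℝ[X]) - 1) • (1 : Matrix (Fin m) (Fin m) ℝ[X])).det = (X - 1) ^ m := by
    rw [Matrix.det_smul, Matrix.det_one, mul_one, Fintype.card_fin]
  -- determinant of the top-left 2x2 scalar-block matrix
  have hN : (Matrix.fromBlocks 0 (1 : Matrix (Fin p₁) (Fin p₁) ℝ[X]) (-1 : Matrix (Fin p₁) (Fin p₁) ℝ[X]) 0).det = 1 := by
    have hdecomp : Matrix.fromBlocks 0 (1 : Matrix (Fin p₁) (Fin p₁) ℝ[X]) (-1 : Matrix (Fin p₁) (Fin p₁) ℝ[X]) 0 =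
        Matrix.fromBlocks 1 1 0 1 * Matrix.fromBlocks 1 0 (-1) 1 *
          Matrix.fromBlocks 1 1 0 1 := by
      rw [Matrix.fromBlocks_multiply, Matrix.fromBlocks_multiply]
      norm_num
    rw [hdecomp]
    simp [Matrix.det_mul, Matrix.det_fromBlocks_zero₂₁, Matrix.det_fromBlocks_zero₁₂]
  have hW : (Matrix.fromBlocks (((X : ℝ[X]) + 1) • (1 : Matrix (Fin p₁) (Fin p₁) ℝ[X])) (-1) 1
      (((X : ℝ[X]) - 1) • (1 : Matrix (Fin p₁) (Fin p₁) ℝ[X]))).det = X ^ (2 * p₁) := by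
    have hmul : Matrix.fromBlocks (((X : ℝ[X]) + 1) • (1 : Matrix (Fin p₁) (Fin p₁) ℝ[X])) (-1) 1
          (((X : ℝ[X]) - 1) • (1 : Matrix (Fin p₁) (Fin p₁) ℝ[X])) * Matrix.fromBlocks 0 (1 : Matrix (Fin p₁) (Fin p₁) ℝ[X]) (-1 : Matrix (Fin p₁) (Fin p₁) ℝ[X]) 0 =
        Matrix.fromBlocks 1 (((X : ℝ[X]) + 1) • 1) (-(((X : ℝ[X]) - 1) • (1 : Matrix (Fin p₁) (Fin p₁) ℝ[X]))) 1 := by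
      rw [Matrix.fromBlocks_multiply]
      simp
    have := congrArg Matrix.det hmul
    rw [Matrix.det_mul, hN, mul_one] at this
    rw [this, Matrix.det_fromBlocks_one₂₂]
    have : (1 : Matrix (Fin p₁) (Fin p₁) ℝ[X]) - (((X : ℝ[X]) + 1) • (1 : Matrix (Fin p₁) (Fin p₁) ℝ[X])) * (-(((X : ℝ[X]) - 1) • (1 : Matrix (Fin p₁) (Fin p₁) ℝ[X]))) =
        ((X : ℝ[X]) ^ 2) • 1 := by
      rw [Matrix.mul_neg, sub_neg_eq_add, Matrix.smul_mul, Matrix.mul_smul, Matrix.mul_one,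
        smul_smul]
      ext i j
      simp [Matrix.one_apply]
      split <;> ring_nf <;> simp
    rw [this, Matrix.det_smul, Matrix.det_one, mul_one, Fintype.card_fin, ← pow_mul]
  rw [hW, hdm]
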